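/- arXiv:1906.02238 — 4 statements merged into one kernel-verified Lean document; each statement's English description precedes it below -/
import Mathlib

section
/- Let D_S (source) and D_T (target) be distributions on X with labeling functions f_S, f_T : X → {0,1}. For any hypotheses h_1, h_2 in a class H: ε_T(h_1) ≤ ε_T(h_2) + ε_S(h_1,h_2) + (1/2) d_{H∆H}(D_S, D_T), where ε_T(h) = P_{D_T}(h ≠ f_T) and ε_S(h_1,h_2) = P_{D_S}(h_1 ≠ h_2). -/
open MeasureTheory

/-- Probability that two hypotheses disagree under `D`. -/
noncomputable def errP {X : Type*} [MeasurableSpace X] (D : Measure X)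
    (h h' : X → Bool) : ℝ :=
  (D {x | h x ≠ h' x}).toReal

/-- Error of hypothesis `h` against labeling function `f` under `D`. -/
noncomputable def errL {X : Type*} [MeasurableSpace X] (D : Measure X)
    (f h : X → Bool) : ℝ :=
  (D {x | h x ≠ f x}).toReal

/-- The `H∆H`-divergence between two measures. -/
noncomputable def dHH {X : Type*} [MeasurableSpace X] (H : Set (X → Bool))
    (D₁ D₂ : Measure X) : ℝ :=
  2 * sSup ((fun p : (X → Bool) × (X → Bool) =>
      |errP D₁ p.1 p.2 - errP D₂ p.1 p.2|) '' (H ×ˢ H))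

lemma errP_nonneg {X : Type*} [MeasurableSpace X] (D : Measure X)
    (h h' : X → Bool) : 0 ≤ errP D h h' := ENNReal.toReal_nonneg

lemma errP_le_one {X : Type*} [MeasurableSpace X] (D : Measure X)
    [IsProbabilityMeasure D] (h h' : X → Bool) : errP D h h' ≤ 1 := by
  unfold errP
  have := prob_le_one (μ := D) (s := {x | h x ≠ h' x})
  calc (D {x | h x ≠ h' x}).toReal ≤ (1 : ENNReal).toReal :=
        ENNReal.toReal_mono ENNReal.one_ne_top this
    _ = 1 := ENNReal.toReal_one

theorem target_err_bound {X : Type*} [MeasurableSpace X] (D_S D_T : Measure X)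
    [IsProbabilityMeasure D_S] [IsProbabilityMeasure D_T]
    (f_S f_T : X → Bool) (mfS : Measurable f_S) (mfT : Measurable f_T)
    (H : Set (X → Bool)) (hmeas : ∀ g ∈ H, Measurable g)
    (h₁ h₂ : X → Bool) (hh₁ : h₁ ∈ H) (hh₂ : h₂ ∈ H) :
    errL D_T f_T h₁ ≤ errL D_T f_T h₂ + errP D_S h₁ h₂
      + (1/2) * dHH H D_S D_T := by
  -- Step 1: triangle inequality under D_T
  have tri : errL D_T f_T h₁ ≤ errL D_T f_T h₂ + errP D_T h₁ h₂ := by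
    unfold errL errP
    rw [← ENNReal.toReal_add (measure_ne_top _ _) (measure_ne_top _ _)]
    refine ENNReal.toReal_mono (by finiteness) ?_
    calc D_T {x | h₁ x ≠ f_T x}
        ≤ D_T ({x | h₂ x ≠ f_T x} ∪ {x | h₁ x ≠ h₂ x}) := by
          apply measure_mono
          intro x hx
          by_cases h : h₂ x = f_T x
          · right
            simp only [Set.mem_setOf_eq] at hx ⊢
            intro he; exact hx (he.trans h)
          · left; exact h
      _ ≤ _ := measure_union_le _ _
  -- Step 2: boundedness of the divergence set
  have hbdd : BddAbove ((fun p : (X → Bool) × (X → Bool) =>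
      |errP D_S p.1 p.2 - errP D_T p.1 p.2|) '' (H ×ˢ H)) := by
    refine ⟨1, ?_⟩
    rintro y ⟨p, _, rfl⟩
    have h1 := errP_le_one (X := X) D_S p.1 p.2
    have h2 := errP_le_one (X := X) D_T p.1 p.2
    have h3 := errP_nonneg (X := X) D_S p.1 p.2
    have h4 := errP_nonneg (X := X) D_T p.1 p.2
    exact abs_le.mpr ⟨by linarith, by linarith⟩
  have hmem : |errP D_S h₁ h₂ - errP D_T h₁ h₂| ∈
      ((fun p : (X → Bool) × (X → Bool) =>
      |errP D_S p.1 p.2 - errP D_T p.1 p.2|) '' (H ×ˢ H)) :=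
    ⟨(h₁, h₂), ⟨hh₁, hh₂⟩, rfl⟩
  have hle := le_csSup hbdd hmem
  have habs : errP D_T h₁ h₂ - errP D_S h₁ h₂ ≤ |errP D_S h₁ h₂ - errP D_T h₁ h₂| := by
    rw [abs_sub_comm]; exact le_abs_self _
  have hd : (1/2) * dHH H D_S D_T =
      sSup ((fun p : (X → Bool) × (X → Bool) =>
      |errP D_S p.1 p.2 - errP D_T p.1 p.2|) '' (H ×ˢ H)) := by
    unfold dHH; ring
  linarith
end

section
/- For any hypothesis h_1 ∈ H: ε_T(h_1) ≤ γ_1 + (1/2)γ_2 + ε_S(h_1) + (1/2) d_{H∆H}(D_α, D_T) + (1/4) d_{H∆H}(D_S, D_B), where γ_1 = min_{h∈H} {ε_T(h) + (1/2)ε_S(h) + (1/2)ε_B(h)}, γ_2 = min_{h∈H} {ε_B(h) + ε_S(h)}, and D_α = (1/2)D_S + (1/2)D_B. -/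
open MeasureTheory

lemma errP_comm {X : Type*} [MeasurableSpace X] (D : Measure X) (h h' : X → Bool) :
    errP D h h' = errP D h' h := by
  simp [errP, ne_comm]

lemma errP_triangle {X : Type*} [MeasurableSpace X] (D : Measure X) [IsFiniteMeasure D]
    (a b c : X → Bool) : errP D a c ≤ errP D a b + errP D b c := by
  have hsub : {x | a x ≠ c x} ⊆ {x | a x ≠ b x} ∪ {x | b x ≠ c x} := by
    intro x hx
    simp only [Set.mem_setOf_eq, Set.mem_union]
    by_contra h
    push_neg at h
    exact hx (h.1.trans h.2)
  calc errP D a c ≤ (D ({x | a x ≠ b x} ∪ {x | b x ≠ c x})).toReal :=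
        ENNReal.toReal_mono (measure_ne_top _ _) (measure_mono hsub)
    _ ≤ (D {x | a x ≠ b x} + D {x | b x ≠ c x}).toReal :=
        ENNReal.toReal_mono (by finiteness) (measure_union_le _ _)
    _ = errP D a b + errP D b c := ENNReal.toReal_add (measure_ne_top _ _) (measure_ne_top _ _)

lemma abs_le_half_dHH {X : Type*} [MeasurableSpace X] (H : Set (X → Bool))
    (D₁ D₂ : Measure X) [IsProbabilityMeasure D₁] [IsProbabilityMeasure D₂]
    {g g' : X → Bool} (hg : g ∈ H) (hg' : g' ∈ H) :
    |errP D₁ g g' - errP D₂ g g'| ≤ (1/2) * dHH H D₁ D₂ := by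
  have hmem : |errP D₁ g g' - errP D₂ g g'| ∈
      ((fun p : (X → Bool) × (X → Bool) =>
        |errP D₁ p.1 p.2 - errP D₂ p.1 p.2|) '' (H ×ˢ H)) :=
    ⟨(g, g'), Set.mk_mem_prod hg hg', rfl⟩
  have hbdd : BddAbove ((fun p : (X → Bool) × (X → Bool) =>
      |errP D₁ p.1 p.2 - errP D₂ p.1 p.2|) '' (H ×ˢ H)) := by
    refine ⟨1, ?_⟩
    rintro _ ⟨p, hp, rfl⟩
    have h1 := errP_le_one D₁ p.1 p.2
    have h2 := errP_le_one D₂ p.1 p.2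
    have h3 := errP_nonneg D₁ p.1 p.2
    have h4 := errP_nonneg D₂ p.1 p.2
    rw [abs_sub_le_iff]
    constructor <;> linarith
  have := le_csSup hbdd hmem
  unfold dHH
  linarith

theorem target_err_gamma_bound {X : Type*} [MeasurableSpace X]
    (D_S D_B D_T : Measure X)
    [IsProbabilityMeasure D_S] [IsProbabilityMeasure D_B] [IsProbabilityMeasure D_T]
    (f_S f_B f_T : X → Bool)
    (mfS : Measurable f_S) (mfB : Measurable f_B) (mfT : Measurable f_T)
    (H : Set (X → Bool)) (hmeas : ∀ g ∈ H, Measurable g)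
    (γ₁ γ₂ : ℝ)
    (hγ₁ : IsLeast ((fun h => errL D_T f_T h + (1/2) * errL D_S f_S h
        + (1/2) * errL D_B f_B h) '' H) γ₁)
    (hγ₂ : IsLeast ((fun h => errL D_B f_B h + errL D_S f_S h) '' H) γ₂)
    (h₁ : X → Bool) (hh₁ : h₁ ∈ H) :
    errL D_T f_T h₁ ≤ γ₁ + (1/2) * γ₂ + errL D_S f_S h₁
      + (1/2) * dHH H ((1/2 : ENNReal) • D_S + (1/2 : ENNReal) • D_B) D_T
      + (1/4) * dHH H D_S D_B := by
  set Dα : Measure X := (1/2 : ENNReal) • D_S + (1/2 : ENNReal) • D_B with hDα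
  haveI : IsProbabilityMeasure Dα := by
    constructor
    simp [hDα, Measure.add_apply, Measure.smul_apply, smul_eq_mul, ENNReal.add_halves]
    rw [ENNReal.inv_two_add_inv_two]
  obtain ⟨h₂, hh₂, hval₂⟩ := hγ₁.1
  obtain ⟨h₃, hh₃, hval₃⟩ := hγ₂.1
  -- split errP at Dα
  have hsplit : ∀ a b : X → Bool,
      errP Dα a b = (1/2) * errP D_S a b + (1/2) * errP D_B a b := by
    intro a b
    have h1 : Dα {x | a x ≠ b x}
        = (1/2 : ENNReal) * D_S {x | a x ≠ b x} + (1/2 : ENNReal) * D_B {x | a x ≠ b x} := by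
      simp [hDα, Measure.add_apply, Measure.smul_apply, smul_eq_mul]
    have hne : (1/2 : ENNReal) * D_S {x | a x ≠ b x} ≠ ⊤ :=
      ENNReal.mul_ne_top (by norm_num) (measure_ne_top _ _)
    have hne' : (1/2 : ENNReal) * D_B {x | a x ≠ b x} ≠ ⊤ :=
      ENNReal.mul_ne_top (by norm_num) (measure_ne_top _ _)
    rw [errP, h1, ENNReal.toReal_add hne hne', ENNReal.toReal_mul, ENNReal.toReal_mul]
    norm_num [errP]
  -- rewrite all errL as errP
  have hL : ∀ (D : Measure X) (f h : X → Bool), errL D f h = errP D h f := fun _ _ _ => rfl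
  -- key inequalities
  have i1 : errP D_T h₁ f_T ≤ errP D_T h₁ h₂ + errP D_T h₂ f_T := errP_triangle _ _ _ _
  have i2 : |errP Dα h₁ h₂ - errP D_T h₁ h₂| ≤ (1/2) * dHH H Dα D_T :=
    abs_le_half_dHH H Dα D_T hh₁ hh₂
  have i2' : errP D_T h₁ h₂ - errP Dα h₁ h₂ ≤ (1/2) * dHH H Dα D_T := by
    have := abs_le.mp i2
    linarith [this.1]
  have i3 := hsplit h₁ h₂
  have i4 : errP D_S h₁ h₂ ≤ errP D_S h₁ f_S + errP D_S f_S h₂ := errP_triangle _ _ _ _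
  have i4' : errP D_S f_S h₂ = errP D_S h₂ f_S := errP_comm _ _ _
  have i5 : errP D_B h₁ h₂ ≤ errP D_B h₁ h₃ + errP D_B h₃ h₂ := errP_triangle _ _ _ _
  have i6 : errP D_B h₃ h₂ ≤ errP D_B h₃ f_B + errP D_B f_B h₂ := errP_triangle _ _ _ _
  have i6' : errP D_B f_B h₂ = errP D_B h₂ f_B := errP_comm _ _ _
  have i7 : |errP D_S h₁ h₃ - errP D_B h₁ h₃| ≤ (1/2) * dHH H D_S D_B :=
    abs_le_half_dHH H D_S D_B hh₁ hh₃
  have i7' : errP D_B h₁ h₃ - errP D_S h₁ h₃ ≤ (1/2) * dHH H D_S D_B := by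
    have := abs_le.mp i7
    linarith [this.1]
  have i8 : errP D_S h₁ h₃ ≤ errP D_S h₁ f_S + errP D_S f_S h₃ := errP_triangle _ _ _ _
  have i8' : errP D_S f_S h₃ = errP D_S h₃ f_S := errP_comm _ _ _
  simp only [hL] at hval₂ hval₃ ⊢
  linarith
end

section
/- Let h_B* ∈ H and h_3 = argmin_{h∈H}{ε_B(h) + ε_S(h)} with γ_2 = ε_B(h_3) + ε_S(h_3). Then ε_S(h_B*) ≤ ε_B(h_B*) + γ_2 + (1/2) d_{H∆H}(D_S, D_B). -/
open MeasureTheory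

lemma tri_aux {X : Type*} [MeasurableSpace X] (D : Measure X)
    [IsProbabilityMeasure D] (f h h' : X → Bool) :
    errL D f h ≤ errP D h h' + errL D f h' := by
  have hsub : {x | h x ≠ f x} ⊆ {x | h x ≠ h' x} ∪ {x | h' x ≠ f x} := by
    intro x hx
    by_cases hc : h x = h' x
    · right; simp only [Set.mem_setOf_eq, ← hc]; exact hx
    · left; exact hc
  have hle := (measure_mono (μ := D) hsub).trans (measure_union_le _ _)
  unfold errL errP
  rw [← ENNReal.toReal_add (measure_ne_top _ _) (measure_ne_top _ _)]
  exact ENNReal.toReal_mono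
    (by simp [ENNReal.add_ne_top, measure_ne_top]) hle

theorem source_err_of_bridge_min {X : Type*} [MeasurableSpace X]
    (D_S D_B : Measure X)
    [IsProbabilityMeasure D_S] [IsProbabilityMeasure D_B]
    (f_S f_B : X → Bool) (mfS : Measurable f_S) (mfB : Measurable f_B)
    (H : Set (X → Bool)) (hmeas : ∀ g ∈ H, Measurable g)
    (hB h₃ : X → Bool) (hhB : hB ∈ H) (hh₃ : h₃ ∈ H)
    (γ₂ : ℝ) (hγ₂def : γ₂ = errL D_B f_B h₃ + errL D_S f_S h₃)
    (h₃min : ∀ h ∈ H, γ₂ ≤ errL D_B f_B h + errL D_S f_S h) :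
    errL D_S f_S hB ≤ errL D_B f_B hB + γ₂ + (1/2) * dHH H D_S D_B := by
  set S := ((fun p : (X → Bool) × (X → Bool) =>
      |errP D_S p.1 p.2 - errP D_B p.1 p.2|) '' (H ×ˢ H)) with hS
  have hbdd : BddAbove S := by
    refine ⟨1, ?_⟩
    rintro y ⟨p, _, rfl⟩
    rw [abs_sub_le_iff]
    constructor
    · linarith [errP_le_one D_S p.1 p.2, errP_nonneg D_B p.1 p.2]
    · linarith [errP_le_one D_B p.1 p.2, errP_nonneg D_S p.1 p.2]
  have hmem : |errP D_S hB h₃ - errP D_B hB h₃| ∈ S :=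
    ⟨(hB, h₃), ⟨hhB, hh₃⟩, rfl⟩
  have hsup : |errP D_S hB h₃ - errP D_B hB h₃| ≤ sSup S := le_csSup hbdd hmem
  have hgap : errP D_S hB h₃ ≤ errP D_B hB h₃ + sSup S := by
    have := le_trans (le_abs_self _) hsup
    linarith
  -- errP D_B hB h₃ ≤ errL D_B f_B hB + errL D_B f_B h₃
  have hBtri : errP D_B hB h₃ ≤ errL D_B f_B hB + errL D_B f_B h₃ := by
    have hsub : {x | hB x ≠ h₃ x} ⊆ {x | hB x ≠ f_B x} ∪ {x | h₃ x ≠ f_B x} := by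
      intro x hx
      by_cases hc : hB x = f_B x
      · right; simp only [Set.mem_setOf_eq, ← hc]; exact fun he => hx he.symm
      · left; exact hc
    have hle := (measure_mono (μ := D_B) hsub).trans (measure_union_le _ _)
    unfold errL errP
    rw [← ENNReal.toReal_add (measure_ne_top _ _) (measure_ne_top _ _)]
    exact ENNReal.toReal_mono
      (by simp [ENNReal.add_ne_top, measure_ne_top]) hle
  have hStri : errL D_S f_S hB ≤ errP D_S hB h₃ + errL D_S f_S h₃ :=
    tri_aux D_S f_S hB h₃
  have hdHH : (1/2) * dHH H D_S D_B = sSup S := by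
    unfold dHH; rw [← hS]; ring
  rw [hdHH, hγ₂def]
  linarith
end

section
/- If h_1 ∈ H minimizes ε_S over H and h* ∈ H is arbitrary, then ε_T(h_1) ≤ ε_T(h*) + 2γ + d_{H∆H}(D_S, D_T), where γ = min_{h∈H}{ε_S(h) + ε_T(h)}. (Direct source-to-target version of the bridging bound, population form.) -/
open MeasureTheory

lemma errL_nonneg {X : Type*} [MeasurableSpace X] (D : Measure X)
    (f h : X → Bool) : 0 ≤ errL D f h := ENNReal.toReal_nonneg

lemma toReal_union_le {X : Type*} [MeasurableSpace X] (D : Measure X)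
    [IsProbabilityMeasure D] (s t u : Set X) (hsub : s ⊆ t ∪ u) :
    (D s).toReal ≤ (D t).toReal + (D u).toReal := by
  have h1 : D s ≤ D t + D u := (measure_mono hsub).trans (measure_union_le t u)
  have h2 : (D s).toReal ≤ (D t + D u).toReal :=
    ENNReal.toReal_mono (by simp [ENNReal.add_ne_top, measure_ne_top]) h1
  rwa [ENNReal.toReal_add (measure_ne_top _ _) (measure_ne_top _ _)] at h2

lemma errL_triangle {X : Type*} [MeasurableSpace X] (D : Measure X)
    [IsProbabilityMeasure D] (f h h' : X → Bool) :
    errL D f h ≤ errL D f h' + errP D h h' := by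
  have : {x | h x ≠ f x} ⊆ {x | h' x ≠ f x} ∪ {x | h x ≠ h' x} := by
    intro x hx
    by_cases hc : h' x = f x
    · right; simp only [Set.mem_setOf_eq]; intro he; exact hx (he.trans hc)
    · left; exact hc
  simpa [errL, errP] using toReal_union_le D _ _ _ this

theorem direct_adaptation_bound {X : Type*} [MeasurableSpace X]
    (D_S D_T : Measure X)
    [IsProbabilityMeasure D_S] [IsProbabilityMeasure D_T]
    (f_S f_T : X → Bool) (mfS : Measurable f_S) (mfT : Measurable f_T)
    (H : Set (X → Bool)) (hmeas : ∀ g ∈ H, Measurable g)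
    (h₁ hstar : X → Bool) (hh₁ : h₁ ∈ H) (hhstar : hstar ∈ H)
    (h₁min : ∀ h ∈ H, errL D_S f_S h₁ ≤ errL D_S f_S h)
    (γ : ℝ)
    (hγ : IsLeast ((fun h => errL D_S f_S h + errL D_T f_T h) '' H) γ) :
    errL D_T f_T h₁ ≤ errL D_T f_T hstar + 2 * γ + dHH H D_S D_T := by
  obtain ⟨⟨h', hh', hγeq⟩, -⟩ := hγ
  set S := ((fun p : (X → Bool) × (X → Bool) =>
      |errP D_S p.1 p.2 - errP D_T p.1 p.2|) '' (H ×ˢ H)) with hS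
  have hbdd : BddAbove S := by
    refine ⟨1, ?_⟩
    rintro v ⟨⟨a, b⟩, -, rfl⟩
    have h1 := errP_le_one D_S a b
    have h2 := errP_le_one D_T a b
    have h3 := errP_nonneg D_S a b
    have h4 := errP_nonneg D_T a b
    rw [abs_sub_le_iff]; constructor <;> linarith
  have hmem : |errP D_S h₁ h' - errP D_T h₁ h'| ∈ S :=
    ⟨(h₁, h'), ⟨hh₁, hh'⟩, rfl⟩
  have hsup : |errP D_S h₁ h' - errP D_T h₁ h'| ≤ sSup S := le_csSup hbdd hmem
  have hd : errP D_T h₁ h' ≤ errP D_S h₁ h' + sSup S := by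
    have := abs_le.mp (abs_abs (errP D_S h₁ h' - errP D_T h₁ h') ▸
      (le_refl |errP D_S h₁ h' - errP D_T h₁ h'|))
    have h2 : -(errP D_S h₁ h' - errP D_T h₁ h') ≤ sSup S :=
      (neg_le_abs _).trans hsup
    linarith
  have hsup_nonneg : 0 ≤ sSup S :=
    le_trans (abs_nonneg _) hsup
  -- key chain
  have t1 : errL D_T f_T h₁ ≤ errL D_T f_T h' + errP D_T h₁ h' :=
    errL_triangle D_T f_T h₁ h'
  have t2 : errP D_S h₁ h' ≤ errL D_S f_S h₁ + errL D_S f_S h' := by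
    have hsub : {x | h₁ x ≠ h' x} ⊆ {x | h₁ x ≠ f_S x} ∪ {x | h' x ≠ f_S x} := by
      intro x hx
      by_cases hc : h₁ x = f_S x
      · right; simp only [Set.mem_setOf_eq]; intro he; exact hx (hc.trans he.symm)
      · left; exact hc
    simpa [errP, errL] using toReal_union_le D_S _ _ _ hsub
  have t3 : errL D_S f_S h₁ ≤ errL D_S f_S h' := h₁min h' hh'
  have hstarnn := errL_nonneg D_T f_T hstar
  have hTnn := errL_nonneg D_T f_T h'
  have hγval : errL D_S f_S h' + errL D_T f_T h' = γ := hγeq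
  have : dHH H D_S D_T = 2 * sSup S := rfl
  rw [this]
  linarith
end
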